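/- Let Y be a fractionally Pareto-optimal fractional allocation in which every split object is valued with the same nonzero sign by all its holders, and suppose the consumption graph of Y contains a cycle a₁ − o₁ − ⋯ − a_k − o_k − a₁. Then the product r = ∏_{j=1}^k |u_{a_j, o_{j-1}}| / |u_{a_j, o_j}| equals 1, and the cyclic transfer in either direction (of sufficiently small magnitude) produces an allocation giving every agent exactly the same utility as Y. -/

import Mathlib

/-- `X` is a fractional allocation: nonnegative entries, each object fully allocated. -/
def IsAlloc (n m : ℕ) (X : Fin n → Fin m → ℝ) : Prop :=
  (∀ i o, 0 ≤ X i o) ∧ ∀ o, ∑ i, X i o = 1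

/-- Agent `i`'s additive utility under allocation `X` with utility matrix `U`. -/
def util {n m : ℕ} (U X : Fin n → Fin m → ℝ) (i : Fin n) : ℝ :=
  ∑ o, U i o * X i o

/-- `X` is fractionally Pareto-optimal: no allocation weakly dominates it with one strict gain. -/
def IsFPO (n m : ℕ) (U X : Fin n → Fin m → ℝ) : Prop :=
  ¬ ∃ Y, IsAlloc n m Y ∧ (∀ i, util U X i ≤ util U Y i) ∧ ∃ i, util U X i < util U Y i

/-- The consumption graph of allocation `X`: bipartite on agents ⊕ objects,
with an edge between agent `i` and object `o` iff `X i o > 0`. -/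
def consGraph {n m : ℕ} (X : Fin n → Fin m → ℝ) : SimpleGraph (Fin n ⊕ Fin m) where
  Adj v w :=
    (∃ i o, v = Sum.inl i ∧ w = Sum.inr o ∧ 0 < X i o) ∨
    (∃ i o, v = Sum.inr o ∧ w = Sum.inl i ∧ 0 < X i o)
  symm := by
    constructor
    rintro v w (⟨i, o, rfl, rfl, h⟩ | ⟨i, o, rfl, rfl, h⟩)
    · exact Or.inr ⟨i, o, rfl, rfl, h⟩
    · exact Or.inl ⟨i, o, rfl, rfl, h⟩
  loopless := by
    constructor
    rintro v (⟨i, o, rfl, h, _⟩ | ⟨i, o, rfl, h, _⟩) <;> simp_all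

open Fin.NatCast in
lemma cycle_transfer (n m : ℕ) (U Y : Fin n → Fin m → ℝ) (hY : IsAlloc n m Y)
    (k : ℕ) [NeZero k] (hk : 2 ≤ k)
    (a : Fin k → Fin n) (o : Fin k → Fin m)
    (ha : Function.Injective a) (ho : Function.Injective o)
    (hU1 : ∀ j : Fin k, U (a j) (o j) ≠ 0)
    (ε : ℝ)
    (hd : ∀ t, t < k → |ε * ∏ i ∈ Finset.range t,
        (U (a ((i:Fin k) + 1)) (o (i:Fin k)) / U (a ((i:Fin k) + 1)) (o ((i:Fin k) + 1)))|
      ≤ min (Y (a (t:Fin k)) (o (t:Fin k))) (Y (a ((t:Fin k) + 1)) (o (t:Fin k)))) :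
    ∃ Z : Fin n → Fin m → ℝ, IsAlloc n m Z ∧
      Z (a 0) (o 0) = Y (a 0) (o 0) + ε ∧
      (∀ i p, Z i p ≠ Y i p → ∃ j, (i = a j ∨ i = a (j + 1)) ∧ p = o j) ∧
      util U Z (a 0) = util U Y (a 0) + ε * (1 - ∏ t ∈ Finset.range k,
        (U (a ((t:Fin k) + 1)) (o (t:Fin k)) / U (a ((t:Fin k) + 1)) (o ((t:Fin k) + 1)))) * U (a 0) (o 0) ∧
      ∀ i, i ≠ a 0 → util U Z i = util U Y i := by
  set ρ : ℕ → ℝ := fun t => U (a ((t:Fin k) + 1)) (o (t:Fin k)) / U (a ((t:Fin k) + 1)) (o ((t:Fin k) + 1)) with hρ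
  set d : ℕ → ℝ := fun t => ε * ∏ i ∈ Finset.range t, ρ i with hdd
  have hcast : ∀ t, t < k → ∀ c : Fin k, ((t:ℕ) : Fin k) = c ↔ t = c.val := by
    intro t ht c
    rw [Fin.ext_iff, Fin.val_natCast, Nat.mod_eq_of_lt ht]
  have h1v : (1 : Fin k).val = 1 := by rw [Fin.val_one']; exact Nat.mod_eq_of_lt hk
  have hne01 : ∀ c : Fin k, c ≠ c + 1 := by
    intro c h
    have h0 : c + 0 = c + 1 := by simpa using h
    have h01 : (0 : Fin k) = 1 := add_left_cancel h0
    rw [Fin.ext_iff] at h01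
    simp [h1v] at h01
    omega
  set Z : Fin n → Fin m → ℝ := fun i p => Y i p + ∑ t ∈ Finset.range k,
    (if p = o (t:Fin k) then
      ((if i = a (t:Fin k) then d t else 0) - (if i = a ((t:Fin k) + 1) then d t else 0)) else 0) with hZ
  -- entry formulas
  have hZent : ∀ i (c : Fin k), Z i (o c) = Y i (o c) +
      ((if i = a c then d c.val else 0) - (if i = a (c + 1) then d c.val else 0)) := by
    intro i c
    rw [hZ]
    simp only []
    congr 1
    rw [Finset.sum_eq_single c.val]
    · rw [if_pos (by rw [Fin.cast_val_eq_self]), Fin.cast_val_eq_self]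
    · intro t ht hne
      rw [if_neg]
      intro h
      exact hne (((hcast t (Finset.mem_range.mp ht) c).mp (ho h.symm)))
    · intro h
      exact absurd (Finset.mem_range.mpr c.isLt) h
  have hZoth : ∀ i p, (∀ c : Fin k, p ≠ o c) → Z i p = Y i p := by
    intro i p hp
    rw [hZ]
    simp only []
    rw [Finset.sum_eq_zero fun t _ => if_neg (hp _), add_zero]
  -- nonnegativity
  have hdb : ∀ t, t < k → |d t| ≤ min (Y (a (t:Fin k)) (o (t:Fin k))) (Y (a ((t:Fin k) + 1)) (o (t:Fin k))) := hd
  have hnonneg : ∀ i p, 0 ≤ Z i p := by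
    intro i p
    by_cases hp : ∃ c : Fin k, p = o c
    · obtain ⟨c, rfl⟩ := hp
      rw [hZent]
      have hb := hdb c.val c.isLt
      rw [Fin.cast_val_eq_self] at hb
      obtain ⟨hb1, hb2⟩ := le_min_iff.mp hb
      by_cases h1 : i = a c
      · rw [if_pos h1, if_neg (fun h2 => hne01 c (ha (h1.symm.trans h2))), h1]
        have := neg_abs_le (d c.val)
        linarith
      · rw [if_neg h1]
        by_cases h2 : i = a (c + 1)
        · rw [if_pos h2, h2]
          have := le_abs_self (d c.val)
          linarith
        · rw [if_neg h2]
          simpa using hY.1 i (o c)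
    · push_neg at hp
      rw [hZoth i p hp]
      exact hY.1 i p
  -- column sums
  have hcol : ∀ p, ∑ i, Z i p = 1 := by
    intro p
    rw [hZ]
    simp only []
    rw [Finset.sum_add_distrib, hY.2 p, Finset.sum_comm]
    rw [Finset.sum_congr rfl (fun t _ => ?_), Finset.sum_const_zero, add_zero]
    by_cases hp : p = o (t : Fin k)
    · simp only [hp, if_true]
      rw [Finset.sum_sub_distrib, Finset.sum_ite_eq' Finset.univ (a (t:Fin k)) (fun _ => d t),
        Finset.sum_ite_eq' Finset.univ (a ((t:Fin k)+1)) (fun _ => d t)]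
      simp
    · simp [hp]
  -- utility formula
  have hutil : ∀ i, util U Z i = util U Y i + ∑ t ∈ Finset.range k,
      ((if i = a (t:Fin k) then U i (o (t:Fin k)) * d t else 0)
        - (if i = a ((t:Fin k) + 1) then U i (o (t:Fin k)) * d t else 0)) := by
    intro i
    rw [util, util]
    calc ∑ x, U i x * Z i x
        = ∑ x, (U i x * Y i x + ∑ t ∈ Finset.range k,
            (if x = o (t:Fin k) then U i x * ((if i = a (t:Fin k) then d t else 0)
              - (if i = a ((t:Fin k)+1) then d t else 0)) else 0)) := by
          refine Finset.sum_congr rfl fun x _ => ?_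
          rw [hZ]
          simp only []
          rw [mul_add, Finset.mul_sum]
          refine congrArg _ (Finset.sum_congr rfl fun t _ => ?_)
          rw [mul_ite, mul_zero]
      _ = (∑ x, U i x * Y i x) + ∑ t ∈ Finset.range k, ∑ x : Fin m,
            (if x = o (t:Fin k) then U i x * ((if i = a (t:Fin k) then d t else 0)
              - (if i = a ((t:Fin k)+1) then d t else 0)) else 0) := by
          rw [Finset.sum_add_distrib, Finset.sum_comm]
      _ = (∑ x, U i x * Y i x) + ∑ t ∈ Finset.range k,
            ((if i = a (t:Fin k) then U i (o (t:Fin k)) * d t else 0)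
              - (if i = a ((t:Fin k) + 1) then U i (o (t:Fin k)) * d t else 0)) := by
          refine congrArg _ (Finset.sum_congr rfl fun t _ => ?_)
          rw [Finset.sum_ite_eq' Finset.univ (o (t:Fin k))
            (fun x => U i x * ((if i = a (t:Fin k) then d t else 0)
              - (if i = a ((t:Fin k)+1) then d t else 0)))]
          by_cases h1 : i = a (t:Fin k) <;> by_cases h2 : i = a ((t:Fin k)+1) <;>
            simp [h1, h2, mul_sub]
  -- collapse the two indicator sums
  have hS1 : ∀ j : Fin k, ∑ t ∈ Finset.range k,
      (if a j = a (t:Fin k) then U (a j) (o (t:Fin k)) * d t else 0)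
      = U (a j) (o j) * d j.val := by
    intro j
    rw [Finset.sum_eq_single j.val]
    · rw [Fin.cast_val_eq_self, if_pos rfl]
    · intro t ht hne
      rw [if_neg]
      intro h
      exact hne ((hcast t (Finset.mem_range.mp ht) j).mp (ha h.symm))
    · intro h
      exact absurd (Finset.mem_range.mpr j.isLt) h
  have hS2 : ∀ j : Fin k, ∑ t ∈ Finset.range k,
      (if a j = a ((t:Fin k) + 1) then U (a j) (o (t:Fin k)) * d t else 0)
      = U (a j) (o (j - 1)) * d (j - 1).val := by
    intro j
    rw [Finset.sum_eq_single (j - 1).val]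
    · rw [Fin.cast_val_eq_self, sub_add_cancel, if_pos rfl]
    · intro t ht hne
      rw [if_neg]
      intro h
      have h2 : (t : Fin k) = j - 1 := by
        have := ha h.symm
        rw [← this, add_sub_cancel_right]
      exact hne ((hcast t (Finset.mem_range.mp ht) (j - 1)).mp h2)
    · intro h
      exact absurd (Finset.mem_range.mpr (j - 1).isLt) h
  have hdstep : ∀ t, d (t + 1) = d t * ρ t := by
    intro t
    rw [hdd]
    simp only []
    rw [Finset.prod_range_succ, mul_assoc]
  have hutil2 : ∀ j : Fin k, util U Z (a j) = util U Y (a j)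
      + (U (a j) (o j) * d j.val - U (a j) (o (j - 1)) * d (j - 1).val) := by
    intro j
    rw [hutil, Finset.sum_sub_distrib, hS1 j, hS2 j]
  -- value of (j-1).val
  have hsubval : ∀ j : Fin k, j ≠ 0 → ((j.val - 1 : ℕ) : Fin k) = j - 1 ∧ (j - 1).val = j.val - 1 := by
    intro j hj
    have hv : j.val ≠ 0 := fun h => hj (Fin.ext (by simp [h]))
    have hsucc : (j.val - 1) + 1 = j.val := Nat.succ_pred_eq_of_pos (Nat.pos_of_ne_zero hv)
    have h1 : ((j.val - 1 : ℕ) : Fin k) + 1 = j := by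
      calc ((j.val - 1 : ℕ) : Fin k) + 1 = ((j.val - 1 + 1 : ℕ) : Fin k) := by push_cast; ring
        _ = ((j.val : ℕ) : Fin k) := by rw [hsucc]
        _ = j := Fin.cast_val_eq_self j
    have h2 : ((j.val - 1 : ℕ) : Fin k) = j - 1 := eq_sub_of_add_eq h1
    refine ⟨h2, ?_⟩
    rw [← h2, Fin.val_natCast, Nat.mod_eq_of_lt (by have := j.isLt; omega)]
  have hsub0 : ((k - 1 : ℕ) : Fin k) = (0 : Fin k) - 1 ∧ ((0 : Fin k) - 1).val = k - 1 := by
    have hsucc : (k - 1) + 1 = k := Nat.succ_pred_eq_of_pos (show 0 < k by omega)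
    have h1 : ((k - 1 : ℕ) : Fin k) + 1 = 0 := by
      calc ((k - 1 : ℕ) : Fin k) + 1 = ((k - 1 + 1 : ℕ) : Fin k) := by push_cast; ring
        _ = ((k : ℕ) : Fin k) := by rw [hsucc]
        _ = 0 := Fin.natCast_self k
    have h2 : ((k - 1 : ℕ) : Fin k) = 0 - 1 := eq_sub_of_add_eq h1
    refine ⟨h2, ?_⟩
    rw [← h2, Fin.val_natCast, Nat.mod_eq_of_lt (by omega)]
  -- zero change for j ≠ 0
  have hkey : ∀ j : Fin k, j ≠ 0 →
      U (a j) (o j) * d j.val - U (a j) (o (j - 1)) * d (j - 1).val = 0 := by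
    intro j hj
    obtain ⟨hc, hval⟩ := hsubval j hj
    have hv : j.val ≠ 0 := fun h => hj (Fin.ext (by simp [h]))
    have hsucc : (j.val - 1) + 1 = j.val := Nat.succ_pred_eq_of_pos (Nat.pos_of_ne_zero hv)
    have hdj : d j.val = d (j.val - 1) * ρ (j.val - 1) := by
      conv_lhs => rw [← hsucc]
      exact hdstep _
    have hρj : ρ (j.val - 1) = U (a j) (o (j - 1)) / U (a j) (o j) := by
      rw [hρ]
      simp only []
      rw [hc, sub_add_cancel]
    rw [hval, hdj, hρj]
    field_simp [hU1 j]
    ring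
  -- change for j = 0
  have hkey0 : U (a 0) (o 0) * d (0:Fin k).val - U (a 0) (o (0 - 1)) * d ((0:Fin k) - 1).val
      = ε * (1 - ∏ t ∈ Finset.range k, ρ t) * U (a 0) (o 0) := by
    obtain ⟨hc, hval⟩ := hsub0
    have hsucc : (k - 1) + 1 = k := Nat.succ_pred_eq_of_pos (show 0 < k by omega)
    have hdk : ε * ∏ t ∈ Finset.range k, ρ t = d (k - 1) * ρ (k - 1) := by
      rw [hdd]
      simp only []
      conv_lhs => rw [← hsucc]
      rw [Finset.prod_range_succ]
      ring
    have hρk : ρ (k - 1) = U (a 0) (o (0 - 1)) / U (a 0) (o 0) := by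
      rw [hρ]
      simp only []
      rw [hc, sub_add_cancel]
    have h2 : U (a 0) (o (0 - 1)) * d ((0:Fin k) - 1).val
        = ε * (∏ t ∈ Finset.range k, ρ t) * U (a 0) (o 0) := by
      rw [hval, hdk, hρk]
      field_simp [hU1 0]
    have h0v : ((0:Fin k)).val = 0 := rfl
    rw [h0v, h2]
    have hd0 : d 0 = ε := by rw [hdd]; simp
    rw [hd0]
    ring
  -- assemble
  refine ⟨Z, ⟨hnonneg, hcol⟩, ?_, ?_, ?_, ?_⟩
  · rw [hZent (a 0) 0, if_pos rfl, if_neg (fun h => hne01 0 (ha h)), sub_zero]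
    have hd0 : d (0:Fin k).val = ε := by rw [hdd]; simp
    rw [hd0]
  · intro i p h
    by_cases hp : ∃ c : Fin k, p = o c
    · obtain ⟨c, rfl⟩ := hp
      rw [hZent i c] at h
      by_cases h1 : i = a c
      · exact ⟨c, Or.inl h1, rfl⟩
      · by_cases h2 : i = a (c + 1)
        · exact ⟨c, Or.inr h2, rfl⟩
        · rw [if_neg h1, if_neg h2] at h
          simp at h
    · exact absurd (hZoth i p (fun c hc => hp ⟨c, hc⟩)) h
  · rw [hutil2 0, hkey0]
  · intro i hi
    by_cases hia : ∃ j : Fin k, i = a j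
    · obtain ⟨j, rfl⟩ := hia
      have hj : j ≠ 0 := fun h => hi (by rw [h])
      rw [hutil2 j, hkey j hj, add_zero]
    · push_neg at hia
      rw [hutil i, Finset.sum_eq_zero, add_zero]
      intro t _
      rw [if_neg (hia _), if_neg (hia _), sub_zero]

open Fin.NatCast in
theorem fPO_cycle_product_one_aux (n m : ℕ) (U Y : Fin n → Fin m → ℝ)
    (hY : IsAlloc n m Y)
    (hfpo : ¬ ∃ Y', IsAlloc n m Y' ∧ (∀ i, util U Y i ≤ util U Y' i) ∧ ∃ i, util U Y i < util U Y' i)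
    (k : ℕ) [NeZero k] (hk : 2 ≤ k)
    (a : Fin k → Fin n) (o : Fin k → Fin m)
    (ha : Function.Injective a) (ho : Function.Injective o)
    (hsplit : ∀ j : Fin k, 0 < Y (a j) (o j) ∧ 0 < Y (a (j + 1)) (o j))
    (hsign : ∀ j : Fin k,
      (0 < U (a j) (o j) ∧ 0 < U (a (j + 1)) (o j)) ∨
      (U (a j) (o j) < 0 ∧ U (a (j + 1)) (o j) < 0)) :
    (∏ j : Fin k, |U (a j) (o (j - 1))| / |U (a j) (o j)|) = 1 ∧
    ∃ Y' : Fin n → Fin m → ℝ, IsAlloc n m Y' ∧ Y' ≠ Y ∧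
      (∀ i p, Y' i p ≠ Y i p → ∃ j, (i = a j ∨ i = a (j + 1)) ∧ p = o j) ∧
      ∀ i, util U Y' i = util U Y i := by
  have hU1 : ∀ j : Fin k, U (a j) (o j) ≠ 0 := fun j =>
    (hsign j).elim (fun h => ne_of_gt h.1) (fun h => ne_of_lt h.1)
  set ρ : ℕ → ℝ := fun t => U (a ((t:Fin k) + 1)) (o (t:Fin k)) / U (a ((t:Fin k) + 1)) (o ((t:Fin k) + 1)) with hρ
  set R : ℝ := ∏ t ∈ Finset.range k, ρ t with hR
  set B : ℝ := ∏ i ∈ Finset.range k, max 1 |ρ i| with hB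
  have hone : ∀ s : Finset ℕ, (1:ℝ) ≤ ∏ i ∈ s, max 1 |ρ i| := by
    intro s
    calc (1:ℝ) = ∏ i ∈ s, (1:ℝ) := Finset.prod_const_one.symm
      _ ≤ _ := Finset.prod_le_prod (fun i _ => zero_le_one) (fun i _ => le_max_left _ _)
  have hB1 : (1:ℝ) ≤ B := by
    rw [hB]; exact hone _
  have hBpos : 0 < B := lt_of_lt_of_le one_pos hB1
  have hprodB : ∀ t, t < k → |∏ i ∈ Finset.range t, ρ i| ≤ B := by
    intro t ht
    rw [Finset.abs_prod]
    calc ∏ i ∈ Finset.range t, |ρ i| ≤ ∏ i ∈ Finset.range t, max 1 |ρ i| :=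
          Finset.prod_le_prod (fun i _ => abs_nonneg _) (fun i _ => le_max_right _ _)
      _ ≤ (∏ i ∈ Finset.range t, max 1 |ρ i|) * ∏ i ∈ Finset.Ico t k, max 1 |ρ i| :=
          le_mul_of_one_le_right
            (Finset.prod_nonneg fun i _ => le_trans zero_le_one (le_max_left _ _)) (hone _)
      _ = ∏ i ∈ Finset.range k, max 1 |ρ i| := Finset.prod_range_mul_prod_Ico _ ht.le
      _ = B := hB.symm
  set μ : ℝ := Finset.univ.inf' (Finset.univ_nonempty) (fun j : Fin k => min (Y (a j) (o j)) (Y (a (j + 1)) (o j))) with hμ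
  have hμpos : 0 < μ := by
    rw [hμ, Finset.lt_inf'_iff]
    intro j _
    exact lt_min (hsplit j).1 (hsplit j).2
  have hεok : ∀ ε : ℝ, |ε| ≤ μ / B → ∀ t, t < k → |ε * ∏ i ∈ Finset.range t, ρ i|
      ≤ min (Y (a (t:Fin k)) (o (t:Fin k))) (Y (a ((t:Fin k) + 1)) (o (t:Fin k))) := by
    intro ε hε t ht
    rw [abs_mul]
    calc |ε| * |∏ i ∈ Finset.range t, ρ i| ≤ (μ / B) * B := by
          apply mul_le_mul hε (hprodB t ht) (abs_nonneg _) (by positivity)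
      _ = μ := by field_simp
      _ ≤ _ := Finset.inf'_le _ (Finset.mem_univ ((t:Fin k)))
  -- Step A : R = 1
  have hR1 : R = 1 := by
    by_contra hR1
    set c : ℝ := (1 - R) * U (a 0) (o 0) with hc
    have hcne : c ≠ 0 := mul_ne_zero (sub_ne_zero.mpr (Ne.symm hR1)) (hU1 0)
    set ε : ℝ := (μ / B) * (c / |c|) with hε
    have hεabs : |ε| = μ / B := by
      have h1 : abs (c / |c|) = 1 := by
        rw [abs_div, abs_abs, div_self (abs_ne_zero.mpr hcne)]
      rw [hε, abs_mul, h1, mul_one, abs_of_pos (by positivity)]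
    obtain ⟨Z, hZalloc, _, _, hZ0, hZoth⟩ := cycle_transfer n m U Y hY k hk a o ha ho hU1 ε
      (hεok ε hεabs.le)
    have hZ0' : util U Z (a 0) = util U Y (a 0) + ε * (1 - R) * U (a 0) (o 0) := hZ0
    have hgain : 0 < ε * (1 - R) * U (a 0) (o 0) := by
      have heq : ε * (1 - R) * U (a 0) (o 0) = (μ / B) * (c * c) / |c| := by
        rw [hε, hc]; ring
      have hcc : 0 < c * c := by
        rcases hcne.lt_or_gt with h | h
        · exact mul_pos_of_neg_of_neg h h
        · exact mul_pos h h
      rw [heq]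
      positivity
    apply hfpo
    refine ⟨Z, hZalloc, ?_, a 0, ?_⟩
    · intro i
      by_cases hi : i = a 0
      · rw [hi, hZ0']
        linarith
      · rw [hZoth i hi]
    · rw [hZ0']
      linarith
  -- Step B : the abs product equals |R| = 1
  constructor
  · have h1 : (∏ j : Fin k, |U (a j) (o (j - 1))| / |U (a j) (o j)|) = |R| := by
      rw [hR, Finset.abs_prod]
      rw [← Fin.prod_univ_eq_prod_range (fun t => |ρ t|) k]
      rw [← Equiv.prod_comp (Equiv.addRight (1 : Fin k))
        (fun j => |U (a j) (o (j - 1))| / |U (a j) (o j)|)]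
      refine Finset.prod_congr rfl fun j _ => ?_
      simp only [Equiv.coe_addRight, hρ]
      rw [Fin.cast_val_eq_self, abs_div, add_sub_cancel_right]
    rw [h1, hR1, abs_one]
  -- Step C : the transfer with ε = μ/B
  · have hεabs : |(μ / B)| ≤ μ / B := le_of_eq (abs_of_pos (by positivity))
    obtain ⟨Z, hZalloc, hZent, hZsupp, hZ0, hZoth⟩ := cycle_transfer n m U Y hY k hk a o ha ho hU1
      (μ / B) (hεok (μ / B) hεabs)
    have hZ0' : util U Z (a 0) = util U Y (a 0) + (μ / B) * (1 - R) * U (a 0) (o 0) := hZ0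
    refine ⟨Z, hZalloc, ?_, hZsupp, ?_⟩
    · intro h
      rw [h] at hZent
      have : (0:ℝ) < μ / B := by positivity
      linarith
    · intro i
      by_cases hi : i = a 0
      · rw [hi, hZ0', hR1]
        ring
      · exact hZoth i hi

/-- If an fPO allocation (with each split object valued with the same nonzero sign by all
its holders) has a cycle in its consumption graph, then the cycle product r equals 1, and a
small cyclic transfer yields a different allocation giving every agent the same utility. -/
theorem fPO_cycle_product_one (n m : ℕ) (U Y : Fin n → Fin m → ℝ)
    (hY : IsAlloc n m Y) (hfpo : IsFPO n m U Y)
    (k : ℕ) [NeZero k] (hk : 2 ≤ k)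
    (a : Fin k → Fin n) (o : Fin k → Fin m)
    (ha : Function.Injective a) (ho : Function.Injective o)
    (hsplit : ∀ j : Fin k, 0 < Y (a j) (o j) ∧ 0 < Y (a (j + 1)) (o j))
    (hsign : ∀ j : Fin k,
      (0 < U (a j) (o j) ∧ 0 < U (a (j + 1)) (o j)) ∨
      (U (a j) (o j) < 0 ∧ U (a (j + 1)) (o j) < 0)) :
    (∏ j : Fin k, |U (a j) (o (j - 1))| / |U (a j) (o j)|) = 1 ∧
    ∃ Y' : Fin n → Fin m → ℝ, IsAlloc n m Y' ∧ Y' ≠ Y ∧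
      (∀ i p, Y' i p ≠ Y i p → ∃ j, (i = a j ∨ i = a (j + 1)) ∧ p = o j) ∧
      ∀ i, util U Y' i = util U Y i :=
  fPO_cycle_product_one_aux n m U Y hY hfpo k hk a o ha ho hsplit hsign
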